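/- Let k ∈ ℕ and let χ(y) ∈ ℤ[y] be a polynomial (playing the role of χ_{-y}(X) for a closed complex manifold X of complex dimension 2k). Define polynomials C_n(y) ∈ ℚ[y] by the identity ∑_{n≥0} C_n(y) q^n = exp( ∑_{n≥1} (q^n/n) · χ(y^n) / (1 - (y^k q)^n) ) in ℚ[[y,q]] (these are the orbifold genera χ_{-y}(X^n,S_n)). Then, in the ring ℚ((y))[[p]] of formal power series in p over the field of formal Laurent series in y, one has ∑_{n≥0} y^{-kn} C_n(y) p^n = exp( ∑_{m≥1} (y^{-km} χ(y^m)) · p^m / ( m (1 - p^m) ) ). (This proves the q = 0 specialization of the Dijkgraaf–Moore–Verlinde–Verlinde formula for elliptic genera of symmetric products, with χ(M,G;0,y) defined as y^{-dim M/2} χ_{-y}(M,G).) -/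

import Mathlib

/-!
STATEMENT 13.  Let `k : ℕ` and let `χ ∈ ℤ[y]` (playing the role of `χ_{-y}(X)`
for a closed complex manifold `X` of complex dimension `2k`).  Polynomials
`C_n ∈ ℚ[y]` are *defined* by the identity
`∑_{n≥0} C_n(y) q^n = exp (∑_{n≥1} (q^n/n) χ(y^n)/(1-(y^k q)^n))` in
`ℚ[[y,q]]`, modelled as `ℚ[[y]][[q]]` (`y` inner, `q` outer variable); this is
the hypothesis `hC`.  There, `(1-(y^k q)^n)⁻¹` is the geometric-series inverse
of a unit (via `Ring.inverse`), the `n`-th summand inside `exp` is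
`≡ 0 mod q^n`, so the sum over `n ≥ 1` is defined coefficientwise by truncation
at `n ≤ N` for the `q^N` coefficient, and `pexp f = ∑_j f^j/j!` is the
exponential of a power series with zero constant term, given by the finite
sums `coeff N (pexp f) = ∑_{j≤N} coeff N (f^j)/j!`.

The conclusion is the identity, in `ℚ((y))[[p]]` — power series in `p` over
the field `LaurentSeries ℚ` of formal Laurent series in `y` —
`∑_{n≥0} y^{-kn} C_n(y) p^n = exp (∑_{m≥1} (y^{-km} χ(y^m)) p^m/(m(1-p^m)))`,
where `y` is the image of `PowerSeries.X` in `ℚ((y))`, `y^{-kn}` is a `zpow`,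
`(1-p^m)⁻¹` is the inverse in `(ℚ((y)))[[p]]` (field coefficients), the sum
over `m ≥ 1` is again defined coefficientwise by truncation at `m ≤ N` for the
`p^N` coefficient, and `pexp` is as above.
-/

open PowerSeries Finset

/-- The exponential of a formal power series (with zero constant term) over a
`ℚ`-algebra: `pexp f = ∑_{j≥0} f^j / j!`. -/
noncomputable def pexp {R : Type*} [CommRing R] [Algebra ℚ R] (f : PowerSeries R) :
    PowerSeries R :=
  PowerSeries.mk fun n =>
    ∑ j ∈ Finset.range (n + 1),
      algebraMap ℚ R (1 / j.factorial) * PowerSeries.coeff (R := R) n (f ^ j)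

/-- The `n`-th summand `(q^n/n) · χ(y^n) / (1 - (y^k q)^n)` of the series defining the
`C_n`, an element of `ℚ[[y]][[q]]`. -/
noncomputable def defTerm (k : ℕ) (χ : Polynomial ℤ) (n : ℕ) : PowerSeries (PowerSeries ℚ) :=
  PowerSeries.C (R := PowerSeries ℚ)
      ((n : ℚ)⁻¹ • Polynomial.aeval ((PowerSeries.X : PowerSeries ℚ) ^ n) χ) *
    PowerSeries.X ^ n *
    Ring.inverse (1 - (PowerSeries.C (R := PowerSeries ℚ) ((PowerSeries.X : PowerSeries ℚ) ^ k) *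
      PowerSeries.X) ^ n)

/-- The variable `y` of `ℚ((y))`. -/
noncomputable def yL : LaurentSeries ℚ := ((PowerSeries.X : PowerSeries ℚ) : LaurentSeries ℚ)

/-- The `m`-th summand `(y^{-km} χ(y^m)) · p^m/(m(1-p^m))` of the series in the
conclusion, an element of `(ℚ((y)))[[p]]`. -/
noncomputable def conclTerm (k : ℕ) (χ : Polynomial ℤ) (m : ℕ) :
    PowerSeries (LaurentSeries ℚ) :=
  PowerSeries.C (R := LaurentSeries ℚ)
      (algebraMap ℚ (LaurentSeries ℚ) ((m : ℚ)⁻¹) * yL ^ (-(k * m : ℤ)) *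
        Polynomial.aeval (yL ^ m) χ) *
    PowerSeries.X ^ m * (1 - (PowerSeries.X : PowerSeries (LaurentSeries ℚ)) ^ m)⁻¹

/- auxiliary -/
noncomputable def ι : PowerSeries ℚ →+* LaurentSeries ℚ := HahnSeries.ofPowerSeries ℤ ℚ

theorem yL_ne_zero : yL ≠ 0 := by
  intro h
  exact PowerSeries.X_ne_zero (HahnSeries.ofPowerSeries_injective (Γ := ℤ) (R := ℚ)
    (by simpa [yL] using h))

theorem rescale_C' {R : Type*} [CommRing R] (a c : R) :
    PowerSeries.rescale a (PowerSeries.C (R := R) c) = PowerSeries.C (R := R) c := by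
  ext n
  simp only [PowerSeries.coeff_rescale, PowerSeries.coeff_C]
  split <;> simp_all

noncomputable def Φ (k : ℕ) : PowerSeries (PowerSeries ℚ) →+* PowerSeries (LaurentSeries ℚ) :=
  (PowerSeries.rescale (yL ^ (-(k:ℤ)))).comp (PowerSeries.map ι)

theorem coeff_Φ (k : ℕ) (f : PowerSeries (PowerSeries ℚ)) (N : ℕ) :
    PowerSeries.coeff N (Φ k f) = (yL ^ (-(k:ℤ)))^N * ι (PowerSeries.coeff N f) := by
  simp [Φ, PowerSeries.coeff_rescale]

theorem Φ_C (k : ℕ) (a : PowerSeries ℚ) :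
    Φ k (PowerSeries.C a) = PowerSeries.C (ι a) := by
  simp [Φ, rescale_C']

theorem Φ_X (k : ℕ) :
    Φ k (PowerSeries.X) = PowerSeries.C (yL ^ (-(k:ℤ))) * PowerSeries.X := by
  simp [Φ, PowerSeries.rescale_X]

theorem ι_C (a : ℚ) : ι (PowerSeries.C (R := ℚ) a) = algebraMap ℚ (LaurentSeries ℚ) a := by
  simp [ι, HahnSeries.ofPowerSeries_C]

theorem ι_X : ι PowerSeries.X = yL := rfl

theorem ι_aeval (p : Polynomial ℤ) (a : PowerSeries ℚ) :
    ι (Polynomial.aeval a p) = Polynomial.aeval (ι a) p := by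
  rw [Polynomial.aeval_def, Polynomial.aeval_def, Polynomial.hom_eval₂,
    RingHom.ext_int (ι.comp (algebraMap ℤ (PowerSeries ℚ))) (algebraMap ℤ (LaurentSeries ℚ))]

theorem ι_coe (p : Polynomial ℚ) : ι (p : PowerSeries ℚ) = Polynomial.aeval yL p := by
  induction p using Polynomial.induction_on' with
  | add a b ha hb => push_cast [Polynomial.coe_add]; rw [map_add, map_add, ha, hb]
  | monomial n a =>
      rw [← Polynomial.C_mul_X_pow_eq_monomial, Polynomial.coe_mul, Polynomial.coe_pow,
        Polynomial.coe_C, Polynomial.coe_X, map_mul, map_pow, map_mul, map_pow, Polynomial.aeval_C,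
        Polynomial.aeval_X, ι_C]
      rfl

theorem ring_inverse_eq {R : Type*} [CommRing R] {u v : R} (hu : IsUnit u) (h : u * v = 1) :
    Ring.inverse u = v := by
  calc Ring.inverse u = Ring.inverse u * (u * v) := by rw [h, mul_one]
    _ = (Ring.inverse u * u) * v := by ring
    _ = v := by rw [Ring.inverse_mul_cancel _ hu, one_mul]

theorem map_ring_inverse {R S : Type*} [CommRing R] [CommRing S] (φ : R →+* S) {u : R}
    (hu : IsUnit u) : φ (Ring.inverse u) = Ring.inverse (φ u) := by
  obtain ⟨w, rfl⟩ := hu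
  rw [Ring.inverse_unit]
  refine (ring_inverse_eq (w.map φ.toMonoidHom).isUnit ?_).symm
  show φ ↑w * φ ↑w⁻¹ = 1
  rw [← map_mul, Units.mul_inv, map_one]

theorem unit_def (k : ℕ) (n : ℕ) (hn : 1 ≤ n) :
    IsUnit (1 - (PowerSeries.C (R := PowerSeries ℚ) ((PowerSeries.X : PowerSeries ℚ) ^ k) *
      PowerSeries.X) ^ n) := by
  rw [PowerSeries.isUnit_iff_constantCoeff]
  have : (PowerSeries.constantCoeff (R := PowerSeries ℚ))
      ((PowerSeries.C (R := PowerSeries ℚ) ((PowerSeries.X : PowerSeries ℚ) ^ k) *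
      PowerSeries.X) ^ n) = 0 := by
    rw [map_pow, map_mul, PowerSeries.constantCoeff_X, mul_zero, zero_pow (by omega)]
  rw [map_sub, this, map_one, sub_zero]
  exact isUnit_one

theorem zpow_pow (k n : ℕ) : (yL ^ (-(k:ℤ)))^n = yL ^ (-(k * n : ℤ)) := by
  rw [← zpow_natCast (yL ^ (-(k:ℤ))) n, ← zpow_mul]
  ring_nf

theorem Φ_defTerm (k : ℕ) (χ : Polynomial ℤ) (n : ℕ) (hn : 1 ≤ n) :
    Φ k (defTerm k χ n) = conclTerm k χ n := by
  have hXn : Φ k ((PowerSeries.C (R := PowerSeries ℚ) ((PowerSeries.X : PowerSeries ℚ) ^ k) *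
      PowerSeries.X) ^ n) = PowerSeries.X ^ n := by
    rw [map_pow, map_mul, Φ_C, Φ_X, map_pow, ι_X]
    rw [← mul_assoc, ← map_mul]
    have : yL ^ k * yL ^ (-(k:ℤ)) = 1 := by
      rw [← zpow_natCast yL k, ← zpow_add₀ yL_ne_zero]
      simp
    rw [this, map_one, one_mul]
  have hinv : Ring.inverse ((1 : PowerSeries (LaurentSeries ℚ)) - PowerSeries.X ^ n) =
      (1 - (PowerSeries.X : PowerSeries (LaurentSeries ℚ)) ^ n)⁻¹ := by
    refine ring_inverse_eq ?_ (PowerSeries.mul_inv_cancel _ ?_)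
    · rw [PowerSeries.isUnit_iff_constantCoeff]
      simp [zero_pow (by omega : n ≠ 0)]
    · simp [zero_pow (by omega : n ≠ 0)]
  rw [defTerm, conclTerm, map_mul, map_mul, map_ring_inverse _ (unit_def k n hn), map_sub,
    map_one, hXn, hinv, Φ_C, map_pow, Φ_X]
  congr 1
  rw [mul_pow, ← map_pow, zpow_pow]
  rw [Algebra.smul_def, map_mul, ι_aeval, map_pow, ι_X]
  have halg : ι (algebraMap ℚ (PowerSeries ℚ) ((n:ℚ)⁻¹)) =
      algebraMap ℚ (LaurentSeries ℚ) ((n:ℚ)⁻¹) := by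
    simp [ι, PowerSeries.algebraMap_apply, HahnSeries.ofPowerSeries_C]
  rw [halg, ← mul_assoc, ← map_mul]
  congr 1
  ring

theorem Φ_pexp (k : ℕ) (f : PowerSeries (PowerSeries ℚ)) :
    Φ k (pexp f) = pexp (Φ k f) := by
  refine PowerSeries.ext fun N => ?_
  rw [coeff_Φ]
  simp only [pexp, PowerSeries.coeff_mk, ← map_pow, coeff_Φ]
  rw [map_sum, Finset.mul_sum]
  refine Finset.sum_congr rfl fun j _ => ?_
  rw [map_mul]
  have halg : ι (algebraMap ℚ (PowerSeries ℚ) (1 / j.factorial)) =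
      algebraMap ℚ (LaurentSeries ℚ) (1 / j.factorial) := by
    simp [ι, PowerSeries.algebraMap_apply, HahnSeries.ofPowerSeries_C]
  rw [halg]
  ring

theorem dmvv_formula_q_zero_specialization (k : ℕ) (χ : Polynomial ℤ)
    (C : ℕ → Polynomial ℚ)
    (hC : (PowerSeries.mk fun n => ((C n : Polynomial ℚ) : PowerSeries ℚ)
        : PowerSeries (PowerSeries ℚ)) =
      pexp (PowerSeries.mk fun N =>
        PowerSeries.coeff (R := PowerSeries ℚ) N (∑ n ∈ Finset.Icc 1 N, defTerm k χ n))) :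
    (PowerSeries.mk fun n => yL ^ (-(k * n : ℤ)) * Polynomial.aeval yL (C n)
        : PowerSeries (LaurentSeries ℚ)) =
      pexp (PowerSeries.mk fun N =>
        PowerSeries.coeff (R := LaurentSeries ℚ) N (∑ m ∈ Finset.Icc 1 N, conclTerm k χ m)) := by
  have h1 : (PowerSeries.mk fun n => yL ^ (-(k * n : ℤ)) * Polynomial.aeval yL (C n)
      : PowerSeries (LaurentSeries ℚ)) =
      Φ k (PowerSeries.mk fun n => ((C n : Polynomial ℚ) : PowerSeries ℚ)) := by
    ext n
    rw [coeff_Φ, PowerSeries.coeff_mk, PowerSeries.coeff_mk, ι_coe, zpow_pow]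
  have h2 : Φ k (PowerSeries.mk fun N =>
      PowerSeries.coeff (R := PowerSeries ℚ) N (∑ n ∈ Finset.Icc 1 N, defTerm k χ n)) =
      PowerSeries.mk fun N =>
        PowerSeries.coeff (R := LaurentSeries ℚ) N (∑ m ∈ Finset.Icc 1 N, conclTerm k χ m) := by
    ext N
    rw [coeff_Φ, PowerSeries.coeff_mk, PowerSeries.coeff_mk]
    have : (yL ^ (-(k:ℤ)))^N * ι (PowerSeries.coeff N (∑ n ∈ Finset.Icc 1 N, defTerm k χ n)) =
        PowerSeries.coeff N (Φ k (∑ n ∈ Finset.Icc 1 N, defTerm k χ n)) := by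
      rw [coeff_Φ]
    have hsum : Φ k (∑ n ∈ Finset.Icc 1 N, defTerm k χ n) =
        ∑ n ∈ Finset.Icc 1 N, conclTerm k χ n := by
      rw [map_sum]
      exact Finset.sum_congr rfl fun n hn => Φ_defTerm k χ n (Finset.mem_Icc.mp hn).1
    rw [this, hsum]
  rw [h1, hC, Φ_pexp, h2]
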